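/- If G is a good graph that contains a cycle, then G does not contain a bridge. -/

import Mathlib

/-- Number of k-nearly independent vertex subsets: subsets whose induced subgraph has exactly k edges. -/
def sigmaK {V : Type*} [Fintype V] [DecidableEq V] (G : SimpleGraph V) [DecidableRel G.Adj] (k : ℕ) : ℕ :=
  (Finset.univ.filter fun s : Finset V =>
    (s.sym2.filter fun e => e ∈ G.edgeSet).card = k).card

/-- A graph is good if for every edge uv, N[u] ∪ N[v] = V(G). -/
def IsGoodGraph {V : Type*} (G : SimpleGraph V) : Prop :=
  ∀ u v : V, G.Adj u v →
    (insert u (G.neighborSet u)) ∪ (insert v (G.neighborSet v)) = Set.univ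

/-- In a cycle based at `w`, there is an edge avoiding `w`. -/
lemma cycle_exists_edge_avoid_base {V : Type*} {G : SimpleGraph V} {w : V}
    (c : G.Walk w w) (hc : c.IsCycle) :
    ∃ x y : V, s(x, y) ∈ c.edges ∧ x ≠ w ∧ y ≠ w := by
  cases c with
  | nil => exact absurd hc.three_le_length (by simp)
  | @cons _ b _ h p =>
    cases p with
    | nil => exact absurd hc.three_le_length (by simp)
    | @cons _ d _ h2 q =>
      refine ⟨b, d, by simp, h.ne', ?_⟩
      rintro rfl
      -- q : G.Walk w w, and (b :: q.support) is nodup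
      have hnd : (b :: q.support).Nodup := by
        have := hc.2
        simpa using this
      cases q with
      | nil =>
        have := hc.three_le_length
        simp at this
      | cons h3 r =>
        have h4 := hnd.of_cons
        rw [SimpleGraph.Walk.support_cons] at h4
        exact (List.nodup_cons.mp h4).1 r.end_mem_support

/-- In any cycle, for any vertex `w`, there is an edge avoiding `w`. -/
lemma cycle_exists_edge_avoid {V : Type*} [DecidableEq V] {G : SimpleGraph V} {a : V}
    (c : G.Walk a a) (hc : c.IsCycle) (w : V) :
    ∃ x y : V, s(x, y) ∈ c.edges ∧ x ≠ w ∧ y ≠ w := by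
  by_cases hw : w ∈ c.support
  · obtain ⟨x, y, hmem, hx, hy⟩ := cycle_exists_edge_avoid_base (c.rotate w hw) (hc.rotate hw)
    exact ⟨x, y, (c.rotate_edges w hw).mem_iff.mp hmem, hx, hy⟩
  · obtain ⟨x, y, hmem, _, _⟩ := cycle_exists_edge_avoid_base c hc
    refine ⟨x, y, hmem, ?_, ?_⟩
    · rintro rfl; exact hw (c.fst_mem_support_of_mem_edges hmem)
    · rintro rfl; exact hw (c.snd_mem_support_of_mem_edges hmem)

theorem stmt4 {V : Type*} (G : SimpleGraph V)
    (hgood : IsGoodGraph G) (hcyc : ¬ G.IsAcyclic) :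
    ∀ e : Sym2 V, ¬ G.IsBridge e := by
  classical
  obtain ⟨a, c, hc⟩ : ∃ (a : V) (c : G.Walk a a), c.IsCycle := by
    simpa [SimpleGraph.IsAcyclic, not_forall] using hcyc
  intro e
  induction e using Sym2.ind with
  | _ u v =>
  intro hbr
  have hnr := SimpleGraph.isBridge_iff.mp hbr
  have hne : s(u, v) ∉ c.edges :=
    hbr.notMem_edges_of_isCycle hc
  have hreach : ∀ p : G.Walk u v, (∀ e' ∈ p.edges, e' ∈ c.edges) → False := by
    intro p hsub
    exact hnr (SimpleGraph.reachable_delete_edges_iff_exists_walk.mpr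
      ⟨p, fun h => hne (hsub _ h)⟩)
  -- key: adjacency avoiding u on one side survives edge deletion
  have key : ∀ x y : V, G.Adj x y → x ≠ u → x ≠ v →
      (G \ SimpleGraph.fromEdgeSet {s(u, v)}).Adj x y := by
    intro x y hxy hxu hxv
    refine ⟨hxy, ?_⟩
    simp only [SimpleGraph.fromEdgeSet_adj, Set.mem_singleton_iff]
    rintro ⟨hmem, -⟩
    rcases Sym2.eq_iff.mp hmem with ⟨rfl, rfl⟩ | ⟨rfl, rfl⟩
    · exact hxu rfl
    · exact hxv rfl
  by_cases huc : u ∈ c.support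
  · by_cases hvc : v ∈ c.support
    · -- both on cycle: find a walk u → v inside the cycle
      have hsplit := c.take_spec huc
      have hv' : v ∈ ((c.takeUntil u huc).append (c.dropUntil u huc)).support := by
        rw [hsplit]; exact hvc
      rw [SimpleGraph.Walk.mem_support_append_iff] at hv'
      rcases hv' with hv1 | hv2
      · refine hreach ((c.takeUntil u huc).dropUntil v hv1).reverse ?_
        intro e' he'
        rw [SimpleGraph.Walk.edges_reverse, List.mem_reverse] at he'
        exact c.edges_takeUntil_subset huc
          ((c.takeUntil u huc).edges_dropUntil_subset hv1 he')
      · refine hreach ((c.dropUntil u huc).takeUntil v hv2) ?_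
        intro e' he'
        exact c.edges_dropUntil_subset huc
          ((c.dropUntil u huc).edges_takeUntil_subset hv2 he')
    · -- v not on cycle: find an edge of the cycle avoiding u (hence avoiding u and v)
      obtain ⟨x, y, hmem, hxu, hyu⟩ := cycle_exists_edge_avoid c hc u
      have hxv : x ≠ v := fun h => hvc (h ▸ c.fst_mem_support_of_mem_edges hmem)
      have hyv : y ≠ v := fun h => hvc (h ▸ c.snd_mem_support_of_mem_edges hmem)
      have hadj : G.Adj x y := c.adj_of_mem_edges hmem
      have hu' : u = x ∨ G.Adj x u ∨ (u = y ∨ G.Adj y u) := by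
        have := Set.eq_univ_iff_forall.mp (hgood x y hadj) u
        simp [Set.mem_union, Set.mem_insert_iff, SimpleGraph.mem_neighborSet] at this
        tauto
      have hv' : v = x ∨ G.Adj x v ∨ (v = y ∨ G.Adj y v) := by
        have := Set.eq_univ_iff_forall.mp (hgood x y hadj) v
        simp [Set.mem_union, Set.mem_insert_iff, SimpleGraph.mem_neighborSet] at this
        tauto
      have hux : G.Adj x u ∨ G.Adj y u := by
        rcases hu' with h | h | h | h
        · exact absurd h.symm hxu
        · exact Or.inl h
        · exact absurd h.symm hyu
        · exact Or.inr h
      have hvx : G.Adj x v ∨ G.Adj y v := by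
        rcases hv' with h | h | h | h
        · exact absurd h.symm hxv
        · exact Or.inl h
        · exact absurd h.symm hyv
        · exact Or.inr h
      have rxy : (G \ SimpleGraph.fromEdgeSet {s(u, v)}).Reachable x y :=
        (key x y hadj hxu hxv).reachable
      have rux : ∀ z : V, G.Adj x z → (G \ SimpleGraph.fromEdgeSet {s(u, v)}).Reachable x z :=
        fun z h => (key x z h hxu hxv).reachable
      have ruy : ∀ z : V, G.Adj y z → (G \ SimpleGraph.fromEdgeSet {s(u, v)}).Reachable y z :=
        fun z h => (key y z h hyu hyv).reachable
      have hR : (G \ SimpleGraph.fromEdgeSet {s(u, v)}).Reachable u v := by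
        rcases hux with h1 | h1 <;> rcases hvx with h2 | h2
        · exact (rux u h1).symm.trans (rux v h2)
        · exact (rux u h1).symm.trans (rxy.trans (ruy v h2))
        · exact (ruy u h1).symm.trans (rxy.symm.trans (rux v h2))
        · exact (ruy u h1).symm.trans (ruy v h2)
      exact hnr hR
  · -- u not on cycle: find an edge of the cycle avoiding v
    obtain ⟨x, y, hmem, hxv, hyv⟩ := cycle_exists_edge_avoid c hc v
    have hxu : x ≠ u := fun h => huc (h ▸ c.fst_mem_support_of_mem_edges hmem)
    have hyu : y ≠ u := fun h => huc (h ▸ c.snd_mem_support_of_mem_edges hmem)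
    have hadj : G.Adj x y := c.adj_of_mem_edges hmem
    have hu' : u = x ∨ G.Adj x u ∨ (u = y ∨ G.Adj y u) := by
      have := Set.eq_univ_iff_forall.mp (hgood x y hadj) u
      simp [Set.mem_union, Set.mem_insert_iff, SimpleGraph.mem_neighborSet] at this
      tauto
    have hv' : v = x ∨ G.Adj x v ∨ (v = y ∨ G.Adj y v) := by
      have := Set.eq_univ_iff_forall.mp (hgood x y hadj) v
      simp [Set.mem_union, Set.mem_insert_iff, SimpleGraph.mem_neighborSet] at this
      tauto
    have hux : G.Adj x u ∨ G.Adj y u := by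
      rcases hu' with h | h | h | h
      · exact absurd h.symm hxu
      · exact Or.inl h
      · exact absurd h.symm hyu
      · exact Or.inr h
    have hvx : G.Adj x v ∨ G.Adj y v := by
      rcases hv' with h | h | h | h
      · exact absurd h.symm hxv
      · exact Or.inl h
      · exact absurd h.symm hyv
      · exact Or.inr h
    have rxy : (G \ SimpleGraph.fromEdgeSet {s(u, v)}).Reachable x y :=
      (key x y hadj hxu hxv).reachable
    have rux : ∀ z : V, G.Adj x z → (G \ SimpleGraph.fromEdgeSet {s(u, v)}).Reachable x z :=
      fun z h => (key x z h hxu hxv).reachable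
    have ruy : ∀ z : V, G.Adj y z → (G \ SimpleGraph.fromEdgeSet {s(u, v)}).Reachable y z :=
      fun z h => (key y z h hyu hyv).reachable
    have hR : (G \ SimpleGraph.fromEdgeSet {s(u, v)}).Reachable u v := by
      rcases hux with h1 | h1 <;> rcases hvx with h2 | h2
      · exact (rux u h1).symm.trans (rux v h2)
      · exact (rux u h1).symm.trans (rxy.trans (ruy v h2))
      · exact (ruy u h1).symm.trans (rxy.symm.trans (rux v h2))
      · exact (ruy u h1).symm.trans (ruy v h2)
    exact hnr hR
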